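/- Let K be a field of characteristic zero, r ≥ 2, and suppose Q = Q_r y^r + Q_{r-1}(x) y^{r-1} + ... + Q_0(x) ∈ K[x,y] with Q_r ∈ K nonzero satisfies Q + c = ((1/r) y + Q_{r-1}(x)/(r^2 Q_r)) · Q_y for some c ∈ K. Then for every i with 1 ≤ i ≤ r−2 one has Q_i(x) = C(r,i) · Q_{r-1}(x)^{r−i} / (r^{r−i} Q_r^{r−i−1}), where C(r,i) is the binomial coefficient. -/

import Mathlib

open Polynomial

/-- If `Q ∈ K[x][y]` has degree `r ≥ 2` in `y` with constant nonzero leading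
coefficient `qr` and `Q + c = ((1/r)·y + Q_{r-1}(x)/(r²·qr)) · Q_y`, then for `1 ≤ i ≤ r−2`,
`Q_i(x) = C(r,i) · Q_{r-1}(x)^{r−i} / (r^{r−i} · qr^{r−i−1})`. -/
theorem stmt_2 (K : Type*) [Field K] [CharZero K]
    (Q : Polynomial (Polynomial K)) (r : ℕ) (qr : K) (c : K)
    (hr : 2 ≤ r) (hdeg : Q.natDegree = r) (hqr : qr ≠ 0)
    (hlead : Q.leadingCoeff = Polynomial.C qr)
    (heq : Q + Polynomial.C (Polynomial.C c) =
      (Polynomial.C (Polynomial.C (r : K)⁻¹) * Polynomial.X +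
        Polynomial.C ((((r : K) ^ 2) * qr)⁻¹ • Q.coeff (r - 1))) * Polynomial.derivative Q) :
    ∀ i : ℕ, 1 ≤ i → i ≤ r - 2 →
      Q.coeff i = ((r.choose i : K) * ((r : K) ^ (r - i) * qr ^ (r - i - 1))⁻¹) •
        (Q.coeff (r - 1)) ^ (r - i) := by
  have hr0 : (r:K) ≠ 0 := Nat.cast_ne_zero.mpr (by omega)
  have rel : ∀ m : ℕ, ((r:K) - (m+1)) • Q.coeff (m+1)
      = ((((m:K)+1)+1) * ((r:K)*qr)⁻¹) • (Q.coeff (r-1) * Q.coeff (m+2)) := by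
    intro m
    have h := congrArg (fun p => Polynomial.coeff p (m+1)) heq
    simp only [Polynomial.coeff_add, Polynomial.coeff_C, Nat.succ_ne_zero, if_false,
      add_zero, add_mul, mul_assoc, Polynomial.coeff_C_mul, Polynomial.coeff_X_mul,
      Polynomial.coeff_derivative] at h
    have e1 : Q.coeff (m+1) * ((m:K[X]) + 1) = ((m:K)+1) • Q.coeff (m+1) := by
      rw [Polynomial.smul_eq_C_mul, mul_comm, map_add, map_natCast, map_one]
    have e2 : Q.coeff (m+1+1) * ((((m+1):ℕ):K[X]) + 1) = (((m:K)+1)+1) • Q.coeff (m+2) := by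
      rw [Polynomial.smul_eq_C_mul, mul_comm, map_add, map_add, map_natCast, map_one]
      push_cast; ring
    rw [e1, e2, ← Polynomial.smul_eq_C_mul, mul_smul_comm, smul_mul_assoc] at h
    linear_combination (norm := match_scalars <;> field_simp <;> ring) ((r:K)) • h
  have main : ∀ k : ℕ, 1 ≤ k → k ≤ r - 1 →
      Q.coeff (r - k) = ((r.choose (r-k) : K) * ((r:K)^k * qr^(k-1))⁻¹) •
        Q.coeff (r-1) ^ k := by
    intro k hk
    induction k, hk using Nat.le_induction with
    | base =>
      intro _
      have h1 : r.choose (r-1) = r := by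
        rw [Nat.choose_symm (by omega), Nat.choose_one_right]
      rw [h1, pow_one, pow_zero, mul_one, pow_one, mul_inv_cancel₀ hr0, one_smul]
    | succ k hk ih =>
      intro hk1
      have ih' := ih (by omega)
      set m := r - k - 2 with hm
      have hm1 : r - (k+1) = m + 1 := by omega
      have hm2 : r - k = m + 2 := by omega
      rw [hm2] at ih'
      rw [hm1]
      have hk0 : ((k:K)+1) ≠ 0 := Nat.cast_add_one_ne_zero k
      have hrc : (r:K) - ((m:K)+1) = (k:K)+1 := by
        have h' : m + 1 + (k + 1) = r := by omega
        have := congrArg (fun n : ℕ => (n:K)) h'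
        push_cast at this
        linear_combination -this
      have hbin : ((r.choose (m+2) : K)) * (((m:K)+1)+1) = (r.choose (m+1) : K) * ((k:K)+1) := by
        have h2 := Nat.choose_succ_right_eq r (m+1)
        rw [show r - (m+1) = k+1 by omega] at h2
        exact_mod_cast h2
      have hrel := rel m
      rw [hrc, ih', mul_smul_comm, smul_smul, ← pow_succ'] at hrel
      have hQ : Q.coeff (m+1) = (((k:K)+1)⁻¹ * (((m:K)+1+1) * ((r:K)*qr)⁻¹ *
          ((r.choose (m+2):K) * ((r:K)^k * qr^(k-1))⁻¹))) • Q.coeff (r-1) ^ (k+1) := by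
        rw [mul_smul, ← hrel, inv_smul_smul₀ hk0]
      rw [hQ]
      congr 1
      have hqk : qr ^ k = qr^(k-1) * qr := by
        rw [← pow_succ, Nat.sub_add_cancel hk]
      rw [Nat.add_sub_cancel, hqk]
      field_simp
      linear_combination ((r:K)^(k+1)) * hbin
  intro i hi1 hi2
  have h1 : 1 ≤ r - i := by omega
  have h2 : r - i ≤ r - 1 := by omega
  have h3 : r - (r - i) = i := by omega
  have := main (r-i) h1 h2
  rwa [h3] at this
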